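/- Let V be a unitary operator on a Hilbert space H₂ and T an operator on a Hilbert space H₁ such that T*ⁿ → 0 in the strong operator topology. If X : H₂ → H₁ is a bounded operator satisfying X V = T X, then X = 0. -/

import Mathlib

open ContinuousLinearMap Filter Topology

/-- Let `V` be a unitary on a Hilbert space `H₂` and `T` an operator on `H₁` with
`T*ⁿ → 0` in the strong operator topology.  If `X : H₂ → H₁` is bounded and `X V = T X`,
then `X = 0`. -/
theorem intertwiner_zero {H₁ H₂ : Type*} [NormedAddCommGroup H₁] [InnerProductSpace ℂ H₁]
    [CompleteSpace H₁] [NormedAddCommGroup H₂] [InnerProductSpace ℂ H₂] [CompleteSpace H₂]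
    (V : H₂ →L[ℂ] H₂) (hV₁ : adjoint V * V = 1) (hV₂ : V * adjoint V = 1)
    (T : H₁ →L[ℂ] H₁)
    (hT : ∀ h : H₁, Tendsto (fun n : ℕ => ((adjoint T) ^ n) h) atTop (𝓝 0))
    (X : H₂ →L[ℂ] H₁) (hX : X ∘L V = T ∘L X) :
    X = 0 := by
  -- Step 1: X ∘ V^n = T^n ∘ X
  have key : ∀ n : ℕ, X ∘L (V ^ n) = (T ^ n) ∘L X := by
    intro n
    induction n with
    | zero => ext x; simp
    | succ n ih =>
      have : X ∘L (V ^ (n + 1)) = (X ∘L (V ^ n)) ∘L V := by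
        ext x; simp [pow_succ, mul_apply]
      rw [this, ih]
      have : ((T ^ n) ∘L X) ∘L V = (T ^ n) ∘L (X ∘L V) := by ext x; simp
      rw [this, hX]
      ext x; simp [pow_succ, mul_apply]
  -- Step 2: adjoint relation: (V*)^n ∘ X* = X* ∘ (T*)^n
  have key2 : ∀ n : ℕ, ((adjoint V) ^ n) ∘L adjoint X = adjoint X ∘L ((adjoint T) ^ n) := by
    intro n
    have := congrArg adjoint (key n)
    simp only [adjoint_comp, ← star_eq_adjoint, star_pow] at this ⊢
    exact this
  -- Step 3: V* is an isometry
  have hiso : ∀ y : H₂, ‖(adjoint V) y‖ = ‖y‖ := by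
    intro y
    have h1 : ‖(adjoint V) y‖ ^ 2 = ‖y‖ ^ 2 := by
      rw [← inner_self_eq_norm_sq (𝕜 := ℂ), ← inner_self_eq_norm_sq (𝕜 := ℂ)]
      have : (inner ℂ ((adjoint V) y) ((adjoint V) y) : ℂ) = inner ℂ (V ((adjoint V) y)) y := by
        rw [adjoint_inner_right]
      rw [this]
      have : V ((adjoint V) y) = y := by
        have := congrArg (fun A => A y) hV₂
        simpa [mul_apply] using this
      rw [this]
    nlinarith [norm_nonneg ((adjoint V) y), norm_nonneg y]
  have hiso_pow : ∀ (n : ℕ) (y : H₂), ‖((adjoint V) ^ n) y‖ = ‖y‖ := by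
    intro n
    induction n with
    | zero => intro y; simp
    | succ n ih =>
      intro y
      rw [pow_succ, ContinuousLinearMap.mul_apply, ih, hiso]
  -- Step 4: adjoint X = 0
  have hadj : adjoint X = 0 := by
    ext h
    have hnorm : ∀ n : ℕ, ‖adjoint X h‖ ≤ ‖adjoint X‖ * ‖((adjoint T) ^ n) h‖ := by
      intro n
      have e1 : ((adjoint V) ^ n) (adjoint X h) = adjoint X (((adjoint T) ^ n) h) := by
        have := congrArg (fun A => A h) (key2 n)
        simpa using this
      calc ‖adjoint X h‖ = ‖((adjoint V) ^ n) (adjoint X h)‖ := (hiso_pow n _).symm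
        _ = ‖adjoint X (((adjoint T) ^ n) h)‖ := by rw [e1]
        _ ≤ ‖adjoint X‖ * ‖((adjoint T) ^ n) h‖ := le_opNorm _ _
    have hlim : Tendsto (fun n : ℕ => ‖adjoint X‖ * ‖((adjoint T) ^ n) h‖) atTop (𝓝 0) := by
      have := (hT h).norm
      simpa using this.const_mul ‖adjoint X‖
    have : ‖adjoint X h‖ ≤ 0 :=
      le_of_tendsto_of_tendsto' tendsto_const_nhds hlim (fun n => hnorm n)
    simpa using le_antisymm this (norm_nonneg _)
  have := congrArg adjoint hadj
  rwa [adjoint_adjoint, map_zero] at this
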